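/- Every counting function in the class #RHΠ1 belongs to the class ΣQSO(Σ2-2SAT), i.e. #RHΠ1 ⊆ ΣQSO(Σ2-2SAT). -/

import Mathlib

/-! ## Finite ordered relational structures and first-order logic -/

/-- A finite relational vocabulary: `card` relation symbols with given arities. -/
structure Vocab where
  card : ℕ
  ar : Fin card → ℕ

/-- A finite ordered `σ`-structure with universe `Fin (n+1)` (the order is the
natural order on `Fin (n+1)`); relations are given as boolean tables. -/
structure StrucOn (σ : Vocab) (n : ℕ) where
  rel : ∀ i : Fin σ.card, (Fin (σ.ar i) → Fin (n + 1)) → Bool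

/-- First-order formulae over `σ` (variables are named by natural numbers). -/
inductive FO (σ : Vocab) : Type
  | eq : ℕ → ℕ → FO σ
  | rel (i : Fin σ.card) (args : Fin (σ.ar i) → ℕ) : FO σ
  | not : FO σ → FO σ
  | or : FO σ → FO σ → FO σ
  | ex : ℕ → FO σ → FO σ
  | top : FO σ
  | bot : FO σ

/-- Satisfaction of a first-order formula in `A` under the first-order assignment `v`. -/
def FO.Sat {σ : Vocab} {n : ℕ} (A : StrucOn σ n) (v : ℕ → Fin (n + 1)) : FO σ → Prop
  | .eq x y => v x = v y
  | .rel i args => A.rel i (fun j => v (args j)) = true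
  | .not φ => ¬ FO.Sat A v φ
  | .or φ ψ => FO.Sat A v φ ∨ FO.Sat A v ψ
  | .ex x φ => ∃ a : Fin (n + 1), FO.Sat A (Function.update v x a) φ
  | .top => True
  | .bot => False

/-- A formula is quantifier-free. -/
def FO.QFree {σ : Vocab} : FO σ → Prop
  | .eq _ _ => True
  | .rel _ _ => True
  | .not φ => FO.QFree φ
  | .or φ ψ => FO.QFree φ ∧ FO.QFree ψ
  | .ex _ _ => False
  | .top => True
  | .bot => True

/-- A second-order assignment: to each second-order variable name and each arity `k`
it assigns a `k`-ary relation on the universe. -/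
def SOAssign (n : ℕ) : Type := ℕ → ∀ k : ℕ, ((Fin k → Fin (n + 1)) → Prop)

/-- Update a second-order assignment at the variable `X` of arity `k`. -/
def updSO {n : ℕ} (V : SOAssign n) (X k : ℕ) (B : (Fin k → Fin (n + 1)) → Prop) :
    SOAssign n := fun Y k' =>
  if h : Y = X ∧ k' = k then fun t => B (fun j => t (Fin.cast h.2.symm j)) else V Y k'

/-! ## The quantitative logic ΣQSO(Σ₂-2SAT) -/

/-- An atom of a 2SAT clause: a (positive or negative) second-order literal
`X(x⃗)` / `¬X(x⃗)`, or an arbitrary first-order formula. -/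
inductive Atom (σ : Vocab) : Type
  | lit (pos : Bool) (X : ℕ) (k : ℕ) (args : Fin k → ℕ) : Atom σ
  | fo (φ : FO σ) : Atom σ

/-- The atom is a first-order formula. -/
def Atom.IsFO {σ : Vocab} : Atom σ → Prop
  | .fo _ => True
  | .lit _ _ _ _ => False

/-- Satisfaction of an atom. -/
def Atom.Sat {σ : Vocab} {n : ℕ} (A : StrucOn σ n) (v : ℕ → Fin (n + 1)) (V : SOAssign n) :
    Atom σ → Prop
  | .lit pos X k args =>
      if pos then V X k (fun j => v (args j)) else ¬ V X k (fun j => v (args j))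
  | .fo φ => FO.Sat A v φ

/-- A 2SAT clause `φ₁ ∨ φ₂ ∨ φ₃`: each `φᵢ` is a second-order literal or a
first-order formula, and at least one of them is a first-order formula. -/
structure Clause2 (σ : Vocab) where
  a1 : Atom σ
  a2 : Atom σ
  a3 : Atom σ
  hasFO : a1.IsFO ∨ a2.IsFO ∨ a3.IsFO

/-- Satisfaction of a 2SAT clause. -/
def Clause2.Sat {σ : Vocab} {n : ℕ} (A : StrucOn σ n) (v : ℕ → Fin (n + 1)) (V : SOAssign n)
    (c : Clause2 σ) : Prop :=
  c.a1.Sat A v V ∨ c.a2.Sat A v V ∨ c.a3.Sat A v V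

/-- A Σ₂-2SAT formula `∃x⃗ ∀y⃗ ⋀ⱼ Cⱼ(x⃗,y⃗)` where the `Cⱼ` are 2SAT clauses. -/
structure Sigma2TwoSat (σ : Vocab) where
  exVars : List ℕ
  allVars : List ℕ
  clauses : List (Clause2 σ)

/-- Satisfaction of a Σ₂-2SAT formula in `A` under assignments `v`, `V`. -/
def Sigma2TwoSat.Sat {σ : Vocab} {n : ℕ} (A : StrucOn σ n) (v : ℕ → Fin (n + 1))
    (V : SOAssign n) (ψ : Sigma2TwoSat σ) : Prop :=
  ∃ w : ℕ → Fin (n + 1), (∀ z, z ∉ ψ.exVars → w z = v z) ∧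
    ∀ u : ℕ → Fin (n + 1), (∀ z, z ∉ ψ.allVars → u z = w z) →
      ∀ c ∈ ψ.clauses, Clause2.Sat A u V c

/-- Quantitative second-order formulae of `ΣQSO(Σ₂-2SAT)`: Σ₂-2SAT formulae,
natural-number constants, addition, and first- and second-order quantitative sums. -/
inductive QSO (σ : Vocab) : Type
  | form (ψ : Sigma2TwoSat σ) : QSO σ
  | const (s : ℕ) : QSO σ
  | add (α β : QSO σ) : QSO σ
  | sumFO (x : ℕ) (α : QSO σ) : QSO σ
  | sumSO (X : ℕ) (k : ℕ) (α : QSO σ) : QSO σ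

open Classical in
/-- The evaluation `[[α]](A, v, V)` of a `ΣQSO(Σ₂-2SAT)` formula (Table 1). -/
noncomputable def QSO.eval {σ : Vocab} {n : ℕ} (A : StrucOn σ n) :
    QSO σ → (ℕ → Fin (n + 1)) → SOAssign n → ℕ
  | .form ψ, v, V => if ψ.Sat A v V then 1 else 0
  | .const s, _, _ => s
  | .add α β, v, V => QSO.eval A α v V + QSO.eval A β v V
  | .sumFO x α, v, V => ∑ a : Fin (n + 1), QSO.eval A α (Function.update v x a) V
  | .sumSO X k α, v, V =>
      ∑ B : Finset (Fin k → Fin (n + 1)), QSO.eval A α v (updSO V X k (fun t => t ∈ B))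

/-- The value `[[α]](A)` of a `ΣQSO(Σ₂-2SAT)` formula on the structure `A`
(free variables get default values; for sentences the choice is irrelevant). -/
noncomputable def qsoVal {σ : Vocab} {n : ℕ} (α : QSO σ) (A : StrucOn σ n) : ℕ :=
  QSO.eval A α (fun _ => 0) (fun _ _ _ => False)

/-! ## The class #RHΠ₁ -/

/-- A second-order literal `X(x⃗)` (a second-order variable applied to a tuple of
first-order variables). -/
structure SLit where
  X : ℕ
  k : ℕ
  args : Fin k → ℕ

/-- A clause of a restricted-Horn CNF: at most one unnegated occurrence of a
second-order variable, at most one negated occurrence of a second-order variable,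
and a quantifier-free first-order part. -/
structure RHClause (σ : Vocab) where
  pos : Option SLit
  neg : Option SLit
  fo : FO σ
  qfree : fo.QFree

/-- Satisfaction of a restricted-Horn clause. -/
def RHClause.Sat {σ : Vocab} {n : ℕ} (A : StrucOn σ n) (v : ℕ → Fin (n + 1))
    (V : SOAssign n) (c : RHClause σ) : Prop :=
  (match c.pos with
    | some l => V l.X l.k (fun j => v (l.args j))
    | none => False) ∨
  (match c.neg with
    | some l => ¬ V l.X l.k (fun j => v (l.args j))
    | none => False) ∨
  FO.Sat A v c.fo

/-- The class `#RHΠ₁`: `F` is expressible as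
`F(A) = |{⟨X⃗,x⃗⟩ : A ⊨ ∀y⃗ ψ(y⃗,x⃗,X⃗)}|` for a restricted-Horn CNF `ψ`.
The counted pairs consist of a second-order assignment supported on the listed
second-order variables `Xs` (with arities) together with a first-order assignment
supported on `xs`. -/
def RHPi1 {σ : Vocab} (F : ∀ n : ℕ, StrucOn σ n → ℕ) : Prop :=
  ∃ (Xs : List (ℕ × ℕ)) (xs ys : List ℕ) (ψ : List (RHClause σ)),
    ∀ (n : ℕ) (A : StrucOn σ n),
      F n A = Set.ncard { p : SOAssign n × (ℕ → Fin (n + 1)) |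
        (∀ Y k, (Y, k) ∉ Xs → ∀ t, ¬ p.1 Y k t) ∧
        (∀ z, z ∉ xs → p.2 z = 0) ∧
        ∀ u : ℕ → Fin (n + 1), (∀ z, z ∉ ys → u z = p.2 z) →
          ∀ c ∈ ψ, RHClause.Sat A u p.1 c }

/-! ## Auxiliary constructions for the proof -/

section Aux

variable {σ : Vocab}

/-- Wrap a quantitative formula in first-order sums over the variables in `xs`. -/
def wrapFO (xs : List ℕ) (β : QSO σ) : QSO σ :=
  xs.foldr (fun x acc => QSO.sumFO x acc) β

/-- Wrap a quantitative formula in second-order sums over the variables in `L`. -/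
def wrapSO (L : List (ℕ × ℕ)) (β : QSO σ) : QSO σ :=
  L.foldr (fun p acc => QSO.sumSO p.1 p.2 acc) β

/-- The atom corresponding to the positive SO literal of a restricted-Horn clause. -/
def posAtom : Option SLit → Atom σ
  | some l => .lit true l.X l.k l.args
  | none => .fo .bot

/-- The atom corresponding to the negative SO literal of a restricted-Horn clause. -/
def negAtom : Option SLit → Atom σ
  | some l => .lit false l.X l.k l.args
  | none => .fo .bot

/-- Translate a restricted-Horn clause into a 2SAT clause. -/
def toClause (c : RHClause σ) : Clause2 σ where
  a1 := posAtom c.pos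
  a2 := negAtom c.neg
  a3 := .fo c.fo
  hasFO := Or.inr (Or.inr trivial)

lemma toClause_sat {n : ℕ} (A : StrucOn σ n) (u : ℕ → Fin (n + 1)) (V : SOAssign n)
    (c : RHClause σ) : Clause2.Sat A u V (toClause c) ↔ RHClause.Sat A u V c := by
  rcases c with ⟨pos, neg, fo, hq⟩
  unfold Clause2.Sat RHClause.Sat toClause
  cases pos <;> cases neg <;>
    simp [posAtom, negAtom, Atom.Sat, FO.Sat]

lemma etaSat {n : ℕ} (A : StrucOn σ n) (ys : List ℕ) (ψ : List (RHClause σ))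
    (v' : ℕ → Fin (n + 1)) (V : SOAssign n) :
    (Sigma2TwoSat.mk [] ys (ψ.map toClause)).Sat A v' V ↔
      ∀ u : ℕ → Fin (n + 1), (∀ z, z ∉ ys → u z = v' z) →
        ∀ c ∈ ψ, RHClause.Sat A u V c := by
  constructor
  · rintro ⟨w, hw, h⟩ u hu c hc
    have hwv : w = v' := funext fun z => hw z List.not_mem_nil
    subst hwv
    exact (toClause_sat A u V c).mp (h u hu (toClause c) (List.mem_map_of_mem hc))
  · intro h
    refine ⟨v', fun z _ => rfl, fun u hu c' hc' => ?_⟩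
    obtain ⟨c, hc, rfl⟩ := List.mem_map.mp hc'
    exact (toClause_sat A u V c).mpr (h u hu c hc)

lemma ncard_fiber {α ι : Type*} [Fintype ι] (S : Set α) (hS : S.Finite)
    (f : α → ι) :
    S.ncard = ∑ i : ι, Set.ncard {a | a ∈ S ∧ f a = i} := by
  classical
  rw [Set.ncard_eq_toFinset_card _ hS,
    Finset.card_eq_sum_card_fiberwise (fun x _ => Finset.mem_univ (f x))]
  refine Finset.sum_congr rfl fun i _ => ?_
  rw [Set.ncard_eq_toFinset_card _ (hS.subset fun a ha => ha.1)]
  congr 1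
  ext a
  simp

lemma finite_FO (n : ℕ) (v : ℕ → Fin (n + 1)) (xs : List ℕ) :
    {v' : ℕ → Fin (n + 1) | ∀ z, z ∉ xs → v' z = v z}.Finite := by
  classical
  have hsub : {v' : ℕ → Fin (n + 1) | ∀ z, z ∉ xs → v' z = v z} ⊆
      Set.range (fun (g : {z : ℕ // z ∈ xs.toFinset} → Fin (n + 1)) (z : ℕ) =>
        if h : z ∈ xs.toFinset then g ⟨z, h⟩ else v z) := by
    intro v' hv'
    refine ⟨fun q => v' q.1, ?_⟩
    funext z
    by_cases h : z ∈ xs.toFinset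
    · simp only [dif_pos h]
    · simp only [dif_neg h]
      exact (hv' z (by simpa using h)).symm
  exact (Set.finite_range _).subset hsub

lemma finite_SO (n : ℕ) (V : SOAssign n) (L : List (ℕ × ℕ)) :
    {V' : SOAssign n | ∀ Y k, (Y, k) ∉ L → ∀ t, V' Y k t ↔ V Y k t}.Finite := by
  classical
  have hsub : {V' : SOAssign n | ∀ Y k, (Y, k) ∉ L → ∀ t, V' Y k t ↔ V Y k t} ⊆
      Set.range (fun (g : ∀ q : {q : ℕ × ℕ // q ∈ L.toFinset},
          (Fin q.1.2 → Fin (n + 1)) → Prop) (Y k : ℕ) =>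
        if h : (Y, k) ∈ L.toFinset then g ⟨(Y, k), h⟩ else V Y k) := by
    intro V' hV'
    refine ⟨fun q => V' q.1.1 q.1.2, ?_⟩
    funext Y k
    by_cases h : (Y, k) ∈ L.toFinset
    · simp only [dif_pos h]
    · simp only [dif_neg h]
      funext t
      exact propext ((hV' Y k (by simpa using h) t)).symm
  exact (Set.finite_range _).subset hsub

lemma updSO_same {n : ℕ} (V : SOAssign n) (X k : ℕ) (B : (Fin k → Fin (n + 1)) → Prop)
    (t : Fin k → Fin (n + 1)) : updSO V X k B X k t = B t := by
  unfold updSO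
  rw [dif_pos ⟨rfl, rfl⟩]
  exact congrArg B (funext fun j => congrArg t (Fin.ext rfl))

lemma updSO_ne {n : ℕ} (V : SOAssign n) {X k Y k' : ℕ} (h : ¬(Y = X ∧ k' = k))
    (B : (Fin k → Fin (n + 1)) → Prop) : updSO V X k B Y k' = V Y k' := by
  unfold updSO
  rw [dif_neg h]

lemma evalFO {n : ℕ} (A : StrucOn σ n) (η : Sigma2TwoSat σ) :
    ∀ xs : List ℕ, xs.Nodup → ∀ (v : ℕ → Fin (n + 1)) (V : SOAssign n),
      QSO.eval A (wrapFO xs (QSO.form η)) v V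
        = Set.ncard {v' : ℕ → Fin (n + 1) |
            (∀ z, z ∉ xs → v' z = v z) ∧ η.Sat A v' V} := by
  classical
  intro xs
  induction xs with
  | nil =>
    intro _ v V
    have hset : {v' : ℕ → Fin (n + 1) |
        (∀ z, z ∉ ([] : List ℕ) → v' z = v z) ∧ η.Sat A v' V}
        = if η.Sat A v V then {v} else (∅ : Set (ℕ → Fin (n + 1))) := by
      by_cases h : η.Sat A v V
      · rw [if_pos h]
        ext v'
        simp only [Set.mem_setOf_eq, Set.mem_singleton_iff]
        constructor
        · rintro ⟨h1, _⟩
          exact funext fun z => h1 z List.not_mem_nil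
        · rintro rfl
          exact ⟨fun _ _ => rfl, h⟩
      · rw [if_neg h]
        ext v'
        simp only [Set.mem_setOf_eq, Set.mem_empty_iff_false, iff_false, not_and]
        intro h1 h2
        have hv : v' = v := funext fun z => h1 z List.not_mem_nil
        exact h (hv ▸ h2)
    rw [hset]
    show (if η.Sat A v V then 1 else 0) = _
    by_cases h : η.Sat A v V
    · rw [if_pos h, if_pos h, Set.ncard_singleton]
    · rw [if_neg h, if_neg h, Set.ncard_empty]
  | cons x rest ih =>
    intro hnd v V
    obtain ⟨hx, hrest⟩ := List.nodup_cons.mp hnd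
    have hstep : QSO.eval A (wrapFO (x :: rest) (QSO.form η)) v V
        = ∑ a : Fin (n + 1),
            QSO.eval A (wrapFO rest (QSO.form η)) (Function.update v x a) V := rfl
    rw [hstep, Finset.sum_congr rfl fun a _ => ih hrest (Function.update v x a) V]
    have hfin : Set.Finite {v' : ℕ → Fin (n + 1) |
        (∀ z, z ∉ (x :: rest) → v' z = v z) ∧ η.Sat A v' V} :=
      (finite_FO n v (x :: rest)).subset fun v' h => h.1
    rw [ncard_fiber _ hfin fun v' => v' x]
    refine Finset.sum_congr rfl fun a _ => ?_
    congr 1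
    ext v'
    simp only [Set.mem_setOf_eq]
    constructor
    · rintro ⟨h1, h2⟩
      have hva : v' x = a := by
        rw [h1 x hx, Function.update_self]
      refine ⟨⟨fun z hz => ?_, h2⟩, hva⟩
      have hz1 : z ≠ x := fun he => hz (he ▸ (List.mem_cons_self : x ∈ x :: rest))
      have hz2 : z ∉ rest := fun he => hz (List.mem_cons_of_mem _ he)
      rw [h1 z hz2, Function.update_of_ne hz1]
    · rintro ⟨⟨h1, h2⟩, hva⟩
      refine ⟨fun z hz => ?_, h2⟩
      by_cases he : z = x
      · subst he
        rw [Function.update_self]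
        exact hva
      · rw [Function.update_of_ne he]
        exact h1 z (by simp [List.mem_cons, he, hz])

lemma evalSO {n : ℕ} (A : StrucOn σ n) (γ : QSO σ) (v₀ : ℕ → Fin (n + 1))
    (G : SOAssign n → (ℕ → Fin (n + 1)) → Prop)
    (T : Set (ℕ → Fin (n + 1))) (hT : T.Finite) (hGT : ∀ V v', G V v' → v' ∈ T)
    (hγ : ∀ V, QSO.eval A γ v₀ V = Set.ncard {v' | G V v'}) :
    ∀ L : List (ℕ × ℕ), L.Nodup → ∀ V : SOAssign n,
      QSO.eval A (wrapSO L γ) v₀ V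
        = Set.ncard {p : SOAssign n × (ℕ → Fin (n + 1)) |
            (∀ Y k, (Y, k) ∉ L → ∀ t, p.1 Y k t ↔ V Y k t) ∧ G p.1 p.2} := by
  classical
  intro L
  induction L with
  | nil =>
    intro _ V
    have hset : {p : SOAssign n × (ℕ → Fin (n + 1)) |
        (∀ Y k, (Y, k) ∉ ([] : List (ℕ × ℕ)) → ∀ t, p.1 Y k t ↔ V Y k t) ∧ G p.1 p.2}
        = (fun v' => (V, v')) '' {v' | G V v'} := by
      ext ⟨V1, v2⟩
      simp only [Set.mem_setOf_eq, Set.mem_image, Prod.mk.injEq]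
      constructor
      · rintro ⟨h1, h2⟩
        have hp1 : V1 = V := funext fun Y => funext fun k => funext fun t =>
          propext (h1 Y k List.not_mem_nil t)
        subst hp1
        exact ⟨v2, h2, rfl, rfl⟩
      · rintro ⟨v', hv', rfl, rfl⟩
        exact ⟨fun _ _ _ _ => Iff.rfl, hv'⟩
    rw [show QSO.eval A (wrapSO [] γ) v₀ V = QSO.eval A γ v₀ V from rfl, hγ V, hset,
      Set.ncard_image_of_injective _ (fun a b h => congrArg Prod.snd h)]
  | cons q rest ih =>
    intro hnd V
    obtain ⟨hq, hrest⟩ := List.nodup_cons.mp hnd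
    obtain ⟨X, k⟩ := q
    have hstep : QSO.eval A (wrapSO ((X, k) :: rest) γ) v₀ V
        = ∑ B : Finset (Fin k → Fin (n + 1)),
            QSO.eval A (wrapSO rest γ) v₀ (updSO V X k fun t => t ∈ B) := rfl
    rw [hstep, Finset.sum_congr rfl fun B _ => ih hrest (updSO V X k fun t => t ∈ B)]
    have hfin : Set.Finite {p : SOAssign n × (ℕ → Fin (n + 1)) |
        (∀ Y k', (Y, k') ∉ ((X, k) :: rest) → ∀ t, p.1 Y k' t ↔ V Y k' t) ∧ G p.1 p.2} := by
      refine Set.Finite.subset ((finite_SO n V ((X, k) :: rest)).prod hT) ?_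
      rintro ⟨V1, v2⟩ ⟨h1, h2⟩
      exact ⟨h1, hGT _ _ h2⟩
    rw [ncard_fiber _ hfin fun p => Finset.univ.filter fun t => p.1 X k t]
    refine Finset.sum_congr rfl fun B _ => ?_
    congr 1
    ext ⟨V1, v2⟩
    simp only [Set.mem_setOf_eq]
    constructor
    · rintro ⟨h1, h2⟩
      have hB : ∀ t, V1 X k t ↔ t ∈ B := fun t => by
        have h' := h1 X k hq t
        simpa only [updSO_same] using h'
      refine ⟨⟨fun Y k' hmem t => ?_, h2⟩, ?_⟩
      · by_cases hyk : Y = X ∧ k' = k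
        · obtain ⟨rfl, rfl⟩ := hyk
          exact absurd List.mem_cons_self hmem
        · have hr : (Y, k') ∉ rest := fun hm => hmem (List.mem_cons_of_mem _ hm)
          have h' := h1 Y k' hr t
          rwa [updSO_ne V hyk] at h'
      · ext t
        simp [hB t]
    · rintro ⟨⟨h1, h2⟩, hfib⟩
      have hB : ∀ t, V1 X k t ↔ t ∈ B := fun t => by
        have h' := Finset.ext_iff.mp hfib t
        simpa using h'
      refine ⟨fun Y k' hr t => ?_, h2⟩
      by_cases hyk : Y = X ∧ k' = k
      · obtain ⟨rfl, rfl⟩ := hyk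
        simp only [updSO_same]
        exact hB t
      · rw [updSO_ne V hyk]
        refine h1 Y k' (fun hm => ?_) t
        rcases List.mem_cons.mp hm with he | hr'
        · exact hyk ⟨congrArg Prod.fst he, congrArg Prod.snd he⟩
        · exact hr hr'

end Aux

/-- Every counting function in the class `#RHΠ₁` belongs to the class
`ΣQSO(Σ₂-2SAT)`, i.e. `#RHΠ₁ ⊆ ΣQSO(Σ₂-2SAT)`. -/
theorem RHPi1_subset_SigmaQSO_Sigma2TwoSat (σ : Vocab) (F : ∀ n : ℕ, StrucOn σ n → ℕ)
    (hF : RHPi1 F) :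
    ∃ α : QSO σ, ∀ (n : ℕ) (A : StrucOn σ n), F n A = qsoVal α A := by
  classical
  obtain ⟨Xs, xs, ys, ψ, hrep⟩ := hF
  refine ⟨wrapSO Xs.dedup (wrapFO xs.dedup
    (QSO.form (Sigma2TwoSat.mk [] ys (ψ.map toClause)))), fun n A => ?_⟩
  rw [hrep n A]
  have hmain := evalSO A (wrapFO xs.dedup
      (QSO.form (Sigma2TwoSat.mk [] ys (ψ.map toClause)))) (fun _ => 0)
    (fun V v' => (∀ z, z ∉ xs.dedup → v' z = (fun _ => (0 : Fin (n + 1))) z) ∧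
      (Sigma2TwoSat.mk [] ys (ψ.map toClause)).Sat A v' V)
    {v' | ∀ z, z ∉ xs.dedup → v' z = (fun _ => (0 : Fin (n + 1))) z}
    (finite_FO n _ xs.dedup) (fun V v' h => h.1)
    (fun V => evalFO A _ xs.dedup (List.nodup_dedup xs) (fun _ => 0) V)
    Xs.dedup (List.nodup_dedup Xs) (fun _ _ _ => False)
  unfold qsoVal
  rw [hmain]
  congr 1
  ext ⟨V1, v2⟩
  simp only [Set.mem_setOf_eq, List.mem_dedup, iff_false, etaSat]
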